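/- Let 1 < p < 2 and X, Y ∈ ℝ^N with X ≠ 0 and Y ≠ 0. Then |X+Y|^p ≥ |X|^p + p|X|^{p−2} (X·Y) + (p(p−1)/2)(|X|+|Y|)^{p−2}|Y|^2. -/

import Mathlib

open Real
open scoped RealInnerProductSpace

set_option maxHeartbeats 1000000


lemma rpow_subadd {x y r : ℝ} (hx : 0 ≤ x) (hy : 0 ≤ y) (hr0 : 0 ≤ r) (hr1 : r ≤ 1) :
    (x + y) ^ r ≤ x ^ r + y ^ r := by
  lift x to NNReal using hx
  lift y to NNReal using hy
  have := NNReal.rpow_add_le_add_rpow x y hr0 hr1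
  exact_mod_cast this

lemma deg_lemma {p : ℝ} (hp1 : 1 < p) (hp2 : p < 2) {a b : ℝ} (ha : 0 < a) (hab : a ≤ b) :
    a ^ p - p * a ^ (p - 1) * b + p * (p - 1) / 2 * b ^ p ≤ (b - a) ^ p := by
  set c : ℝ := p * (p - 1) / 2 with hc
  have hc1 : c < 1 := by rw [hc]; nlinarith
  have hcp : c ≤ p - 1 := by rw [hc]; nlinarith
  set F : ℝ → ℝ := fun x => (x - a) ^ p + p * a ^ (p - 1) * x - a ^ p - c * x ^ p with hF
  have hder : ∀ x : ℝ, HasDerivAt F (p * (x - a) ^ (p - 1) + p * a ^ (p - 1)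
      - c * (p * x ^ (p - 1))) x := by
    intro x
    have h1 : HasDerivAt (fun x : ℝ => (x - a) ^ p) (1 * p * (x - a) ^ (p - 1)) x :=
      ((hasDerivAt_id x).sub_const a).rpow_const (Or.inr hp1.le)
    have h2 : HasDerivAt (fun x : ℝ => x ^ p) (1 * p * x ^ (p - 1)) x :=
      (hasDerivAt_id x).rpow_const (Or.inr hp1.le)
    have h3 : HasDerivAt (fun x : ℝ => p * a ^ (p - 1) * x) (p * a ^ (p - 1)) x :=
      (hasDerivAt_id x).const_mul _ |>.congr_deriv (by ring)
    have := ((h1.add h3).sub_const (a ^ p)).sub (h2.const_mul c)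
    exact this.congr_deriv (by ring)
  have hmono : MonotoneOn F (Set.Ici a) := by
    apply monotoneOn_of_deriv_nonneg (convex_Ici a)
    · exact fun x _ => (hder x).continuousAt.continuousWithinAt
    · exact fun x _ => (hder x).differentiableAt.differentiableWithinAt
    · intro x hx
      rw [interior_Ici] at hx
      rw [(hder x).deriv]
      have hxa : 0 < x - a := sub_pos.mpr hx
      have hx0 : 0 < x := lt_trans ha hx
      have hsub : x ^ (p - 1) ≤ (x - a) ^ (p - 1) + a ^ (p - 1) := by
        have := rpow_subadd (le_of_lt hxa) ha.le (by linarith : (0:ℝ) ≤ p - 1)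
          (by linarith : p - 1 ≤ 1)
        calc x ^ (p - 1) = (x - a + a) ^ (p - 1) := by ring_nf
          _ ≤ (x - a) ^ (p - 1) + a ^ (p - 1) := this
      have hxp : 0 ≤ x ^ (p - 1) := rpow_nonneg hx0.le _
      nlinarith [mul_le_mul_of_nonneg_left hsub (by linarith : (0:ℝ) ≤ p),
        mul_nonneg (mul_nonneg (by linarith : (0:ℝ) ≤ 1 - c) (by linarith : (0:ℝ) ≤ p)) hxp]
  have hFa : 0 ≤ F a := by
    have h0 : (a - a : ℝ) = 0 := by ring
    have : F a = (p - 1 - c) * a ^ p := by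
      rw [hF]
      simp only [h0]
      rw [Real.zero_rpow (by positivity : p ≠ 0)]
      have hap : a ^ (p - 1) * a = a ^ p := by
        rw [← Real.rpow_add_one ha.ne']; ring_nf
      linear_combination p * hap
    rw [this]
    have : 0 ≤ p - 1 - c := by linarith
    positivity
  have := hmono (Set.self_mem_Ici) (Set.mem_Ici.mpr hab) hab
  have hFb : 0 ≤ F b := le_trans hFa this
  rw [hF] at hFb
  simp only at hFb
  linarith



lemma key_lemma {p : ℝ} (hp1 : 1 < p) (hp2 : p < 2) {a b s : ℝ} (ha : 0 < a) (hb : 0 < b)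
    (hs : |s| ≤ a * b) :
    a ^ p + p * a ^ (p - 2) * s + p * (p - 1) / 2 * (a + b) ^ (p - 2) * b ^ 2
      ≤ (a ^ 2 + 2 * s + b ^ 2) ^ (p / 2) := by
  have hsl : -(a * b) ≤ s := (abs_le.mp hs).1
  have hsu : s ≤ a * b := (abs_le.mp hs).2
  by_cases hdeg : s = -(a * b) ∧ a ≤ b
  · obtain ⟨hseq, hab⟩ := hdeg
    subst hseq
    have hba : (0:ℝ) ≤ b - a := by linarith
    have hRHS : (a ^ 2 + 2 * -(a * b) + b ^ 2) ^ (p / 2) = (b - a) ^ p := by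
      have h1 : a ^ 2 + 2 * -(a * b) + b ^ 2 = (b - a) ^ 2 := by ring
      rw [h1, ← Real.rpow_natCast (b - a) 2, ← Real.rpow_mul hba]
      congr 1; push_cast; ring
    rw [hRHS]
    have h2 : p * a ^ (p - 2) * -(a * b) = -(p * a ^ (p - 1) * b) := by
      have : a ^ (p - 2) * a = a ^ (p - 1) := by
        rw [← Real.rpow_add_one ha.ne']; ring_nf
      linear_combination -p * b * this
    rw [h2]
    have h3 : (a + b) ^ (p - 2) * b ^ 2 ≤ b ^ p := by
      have hb2 : (a + b) ^ (p - 2) ≤ b ^ (p - 2) :=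
        rpow_le_rpow_of_nonpos hb (by linarith) (by linarith)
      have hbp : b ^ (p - 2) * b ^ 2 = b ^ p := by
        rw [← Real.rpow_natCast b 2, ← Real.rpow_add hb]; congr 1; push_cast; ring
      calc (a + b) ^ (p - 2) * b ^ 2 ≤ b ^ (p - 2) * b ^ 2 :=
            mul_le_mul_of_nonneg_right hb2 (by positivity)
        _ = b ^ p := hbp
    have hdl := deg_lemma hp1 hp2 ha hab
    have hcpos : (0:ℝ) ≤ p * (p - 1) / 2 := by nlinarith
    nlinarith [mul_le_mul_of_nonneg_left h3 hcpos]
  · -- main case: q(u) > 0 on [0,1]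
    set q : ℝ → ℝ := fun u => a ^ 2 + 2 * s * u + b ^ 2 * u ^ 2 with hqdef
    have hqpos : ∀ u ∈ Set.Icc (0:ℝ) 1, 0 < q u := by
      intro u hu
      obtain ⟨hu0, hu1⟩ := hu
      show 0 < a ^ 2 + 2 * s * u + b ^ 2 * u ^ 2
      rcases eq_or_lt_of_le hu0 with h | h
      · rw [← h]; simp; positivity
      · rcases eq_or_lt_of_le hsl with hse | hse
        · have hba : b < a := by
            by_contra hcon
            exact hdeg ⟨hse.symm, le_of_not_gt hcon⟩
          have hbu : 0 < a - b * u := by nlinarith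
          rw [← hse]
          nlinarith [sq_nonneg (a - b * u)]
        · nlinarith [sq_nonneg (a - b * u), mul_pos h (by linarith : 0 < s + a * b)]
    set m : ℝ := p * (p - 1) * (a + b) ^ (p - 2) * b ^ 2 with hm
    set f : ℝ → ℝ := fun u => q u ^ (p / 2) with hf
    set f1 : ℝ → ℝ := fun u => p * (q u ^ (p / 2 - 1) * (s + b ^ 2 * u)) with hf1
    have hq : ∀ u : ℝ, HasDerivAt q (2 * s + 2 * b ^ 2 * u) u := by
      intro u
      have h1 : HasDerivAt (fun u : ℝ => a ^ 2 + 2 * s * u + b ^ 2 * u ^ 2)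
          (0 + 2 * s * 1 + b ^ 2 * (2 * u ^ 1)) u := by
        exact ((hasDerivAt_const u (a ^ 2)).add
          ((hasDerivAt_id u).const_mul (2 * s))).add
          ((hasDerivAt_pow 2 u).const_mul (b ^ 2))
      convert h1 using 1
      push_cast; ring
    have hfd : ∀ u ∈ Set.Icc (0:ℝ) 1, HasDerivAt f (f1 u) u := by
      intro u hu
      have := (hq u).rpow_const (p := p / 2) (Or.inl (hqpos u hu).ne')
      convert this using 1
      simp only [hf1]
      ring
    have hf1d : ∀ u ∈ Set.Icc (0:ℝ) 1, HasDerivAt f1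
        (p * ((p / 2 - 1) * q u ^ (p / 2 - 2) * ((2 * s + 2 * b ^ 2 * u) * (s + b ^ 2 * u))
          + q u ^ (p / 2 - 1) * b ^ 2)) u := by
      intro u hu
      have h1 := (hq u).rpow_const (p := p / 2 - 1) (Or.inl (hqpos u hu).ne')
      have h2 : HasDerivAt (fun u : ℝ => s + b ^ 2 * u) (b ^ 2) u := by
        simpa using ((hasDerivAt_id u).const_mul (b ^ 2)).const_add s
      have h3 := (h1.mul h2).const_mul p
      rw [show p / 2 - 1 - 1 = p / 2 - 2 from by ring] at h3
      exact h3.congr_deriv (by ring)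
    have hDlb : ∀ u ∈ Set.Icc (0:ℝ) 1,
        m ≤ p * ((p / 2 - 1) * q u ^ (p / 2 - 2) * ((2 * s + 2 * b ^ 2 * u) * (s + b ^ 2 * u))
          + q u ^ (p / 2 - 1) * b ^ 2) := by
      intro u hu
      obtain ⟨hu0, hu1⟩ := hu
      have hr : 0 < q u := hqpos u ⟨hu0, hu1⟩
      have hCS : (s + b ^ 2 * u) ^ 2 ≤ q u * b ^ 2 := by
        have hs2 : s ^ 2 ≤ a ^ 2 * b ^ 2 := by nlinarith
        show _ ≤ (a ^ 2 + 2 * s * u + b ^ 2 * u ^ 2) * b ^ 2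
        nlinarith
      have hstep : q u ^ (p / 2 - 2) * q u = q u ^ (p / 2 - 1) := by
        rw [← Real.rpow_add_one hr.ne']; ring_nf
      have hq2 : q u ≤ (a + b) ^ 2 := by
        show a ^ 2 + 2 * s * u + b ^ 2 * u ^ 2 ≤ _
        have h1 : s * u ≤ a * b * u := mul_le_mul_of_nonneg_right hsu hu0
        have h2 : a * b * u ≤ a * b := by nlinarith
        have hu2 : u ^ 2 ≤ 1 := by nlinarith
        have h3 : b ^ 2 * u ^ 2 ≤ b ^ 2 * 1 := mul_le_mul_of_nonneg_left hu2 (sq_nonneg b)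
        nlinarith
      have hqr : (a + b) ^ (p - 2) ≤ q u ^ (p / 2 - 1) := by
        have he : ((a + b) ^ 2) ^ (p / 2 - 1) = (a + b) ^ (p - 2) := by
          rw [← Real.rpow_natCast (a + b) 2, ← Real.rpow_mul (by positivity)]
          congr 1; push_cast; ring
        rw [← he]
        exact rpow_le_rpow_of_nonpos hr hq2 (by linarith)
      have hrp2 : 0 < q u ^ (p / 2 - 2) := rpow_pos_of_pos hr _
      have hterm : (p - 2) * (q u * b ^ 2) * q u ^ (p / 2 - 2)
          ≤ (p - 2) * (s + b ^ 2 * u) ^ 2 * q u ^ (p / 2 - 2) := by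
        apply mul_le_mul_of_nonneg_right _ hrp2.le
        nlinarith
      have hterm2 : (p - 2) * (q u * b ^ 2) * q u ^ (p / 2 - 2)
          = (p - 2) * b ^ 2 * q u ^ (p / 2 - 1) := by
        rw [← hstep]; ring
      have hc1 : (p - 2) * b ^ 2 * q u ^ (p / 2 - 1)
          ≤ (p - 2) * (s + b ^ 2 * u) ^ 2 * q u ^ (p / 2 - 2) := by
        rw [← hterm2]; exact hterm
      have hfin : p * (p - 1) * (a + b) ^ (p - 2) * b ^ 2
          ≤ p * (p - 1) * q u ^ (p / 2 - 1) * b ^ 2 := by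
        apply mul_le_mul_of_nonneg_right _ (by positivity)
        apply mul_le_mul_of_nonneg_left hqr (by nlinarith)
      rw [hm]
      nlinarith [mul_le_mul_of_nonneg_left hc1 (by linarith : (0:ℝ) ≤ p), hfin]
    -- monotonicity arguments
    have hIcc : Convex ℝ (Set.Icc (0:ℝ) 1) := convex_Icc 0 1
    set g1 : ℝ → ℝ := fun u => f1 u - (f1 0 + m * u) with hg1
    have hg1d : ∀ u ∈ Set.Icc (0:ℝ) 1, HasDerivAt g1
        (p * ((p / 2 - 1) * q u ^ (p / 2 - 2) * ((2 * s + 2 * b ^ 2 * u) * (s + b ^ 2 * u))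
          + q u ^ (p / 2 - 1) * b ^ 2) - m) u := by
      intro u hu
      have h2 : HasDerivAt (fun u : ℝ => f1 0 + m * u) m u := by
        simpa using ((hasDerivAt_id u).const_mul m).const_add (f1 0)
      exact (hf1d u hu).sub h2
    have hg1mono : MonotoneOn g1 (Set.Icc 0 1) := by
      apply monotoneOn_of_deriv_nonneg hIcc
      · exact fun u hu => (hg1d u hu).continuousAt.continuousWithinAt
      · intro u hu
        rw [interior_Icc] at hu
        exact (hg1d u ⟨hu.1.le, hu.2.le⟩).differentiableAt.differentiableWithinAt
      · intro u hu
        rw [interior_Icc] at hu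
        rw [(hg1d u ⟨hu.1.le, hu.2.le⟩).deriv]
        have := hDlb u ⟨hu.1.le, hu.2.le⟩
        linarith
    have hg1nn : ∀ u ∈ Set.Icc (0:ℝ) 1, 0 ≤ g1 u := by
      intro u hu
      have h0 : g1 0 = 0 := by simp [hg1]
      have := hg1mono (Set.mem_Icc.mpr ⟨le_refl 0, zero_le_one⟩) hu hu.1
      linarith
    set g : ℝ → ℝ := fun u => f u - (f 0 + f1 0 * u + m / 2 * u ^ 2) with hg
    have hgd : ∀ u ∈ Set.Icc (0:ℝ) 1, HasDerivAt g (g1 u) u := by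
      intro u hu
      have h2 : HasDerivAt (fun u : ℝ => f 0 + f1 0 * u + m / 2 * u ^ 2)
          (f1 0 + m * u) u := by
        have h3 := (((hasDerivAt_id u).const_mul (f1 0)).const_add (f 0)).add
          ((hasDerivAt_pow 2 u).const_mul (m / 2))
        exact h3.congr_deriv (by push_cast; ring)
      exact (hfd u hu).sub h2
    have hgmono : MonotoneOn g (Set.Icc 0 1) := by
      apply monotoneOn_of_deriv_nonneg hIcc
      · exact fun u hu => (hgd u hu).continuousAt.continuousWithinAt
      · intro u hu
        rw [interior_Icc] at hu
        exact (hgd u ⟨hu.1.le, hu.2.le⟩).differentiableAt.differentiableWithinAt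
      · intro u hu
        rw [interior_Icc] at hu
        rw [(hgd u ⟨hu.1.le, hu.2.le⟩).deriv]
        exact hg1nn u ⟨hu.1.le, hu.2.le⟩
    have hg0 : g 0 = 0 := by simp [hg]
    have hfin := hgmono (Set.mem_Icc.mpr ⟨le_refl 0, zero_le_one⟩)
      (Set.mem_Icc.mpr ⟨zero_le_one, le_refl 1⟩) zero_le_one
    rw [hg0] at hfin
    have hq0 : q 0 = a ^ 2 := by show a ^ 2 + 2 * s * 0 + b ^ 2 * 0 ^ 2 = a ^ 2; ring
    have hq1 : q 1 = a ^ 2 + 2 * s + b ^ 2 := by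
      show a ^ 2 + 2 * s * 1 + b ^ 2 * 1 ^ 2 = _; ring
    have hf0 : f 0 = a ^ p := by
      show q 0 ^ (p / 2) = a ^ p
      rw [hq0, ← Real.rpow_natCast a 2, ← Real.rpow_mul ha.le]
      congr 1; push_cast; ring
    have hf10 : f1 0 = p * a ^ (p - 2) * s := by
      show p * (q 0 ^ (p / 2 - 1) * (s + b ^ 2 * 0)) = _
      rw [hq0, ← Real.rpow_natCast a 2, ← Real.rpow_mul ha.le]
      rw [show ((2:ℕ):ℝ) * (p / 2 - 1) = p - 2 from by push_cast; ring]
      ring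
    have hgval : g 1 = (a ^ 2 + 2 * s + b ^ 2) ^ (p / 2) - a ^ p - p * a ^ (p - 2) * s
        - m / 2 := by
      show q 1 ^ (p / 2) - (f 0 + f1 0 * 1 + m / 2 * 1 ^ 2) = _
      rw [hq1, hf0, hf10]; ring
    rw [hgval, hm] at hfin
    linarith

/-- Quantitative convexity of `X ↦ |X|^p` for `1 < p < 2`: for nonzero vectors
`X, Y ∈ ℝ^N`,
`|X+Y|^p ≥ |X|^p + p|X|^{p−2}(X·Y) + (p(p−1)/2)(|X|+|Y|)^{p−2}|Y|²`. -/
theorem stmt_2 {N : ℕ} (hN : 1 ≤ N) (p : ℝ) (hp1 : 1 < p) (hp2 : p < 2)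
    (X Y : EuclideanSpace ℝ (Fin N)) (hX : X ≠ 0) (hY : Y ≠ 0) :
    ‖X‖ ^ p + p * ‖X‖ ^ (p - 2) * ⟪X, Y⟫
        + (p * (p - 1) / 2) * (‖X‖ + ‖Y‖) ^ (p - 2) * ‖Y‖ ^ (2 : ℝ)
      ≤ ‖X + Y‖ ^ p := by
  have ha : 0 < ‖X‖ := norm_pos_iff.mpr hX
  have hb : 0 < ‖Y‖ := norm_pos_iff.mpr hY
  have hs : |⟪X, Y⟫| ≤ ‖X‖ * ‖Y‖ := abs_real_inner_le_norm X Y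
  have h2 : ‖Y‖ ^ (2:ℝ) = ‖Y‖ ^ (2:ℕ) := by
    rw [show ((2:ℝ)) = ((2:ℕ):ℝ) by norm_num, Real.rpow_natCast]
  have hXY : ‖X + Y‖ ^ p = (‖X‖ ^ 2 + 2 * ⟪X, Y⟫ + ‖Y‖ ^ 2) ^ (p / 2) := by
    rw [← norm_add_sq_real, ← Real.rpow_natCast (‖X + Y‖) 2,
      ← Real.rpow_mul (norm_nonneg _)]
    congr 1; push_cast; ring
  rw [h2, hXY]
  exact key_lemma hp1 hp2 ha hb hs
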